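/- Let P_{X_1,Y_1}, ..., P_{X_m,Y_m} be joint PMFs on a finite product alphabet X × Y whose Y-marginals P_{Y_1},...,P_{Y_m} satisfy ∑_y max2{P_{Y_1}(y),...,P_{Y_m}(y)} ≤ 1. Then there exists a joint PMF on (X × Y)^m whose i-th (X,Y)-marginal equals P_{X_i,Y_i} for each i, and under which ∑_{y∈Y} P(∪_{i=1}^m {Y_i = y}) = ∑_{y∈Y} max{P_{Y_1}(y),...,P_{Y_m}(y)}. -/

import Mathlib

open Finset

def IsPMF {α : Type*} [Fintype α] (P : α → ℝ) : Prop :=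
  (∀ a, 0 ≤ P a) ∧ ∑ a, P a = 1

noncomputable def max2 {ι : Type*} [Fintype ι] (f : ι → ℝ) : ℝ :=
  ⨆ p : {p : ι × ι // p.1 ≠ p.2}, min (f p.val.1) (f p.val.2)

section max2lemmas
variable {ι : Type*} [Fintype ι] {f g : ι → ℝ} {a : ℝ}

lemma min_le_max2 {i j : ι} (h : i ≠ j) : min (f i) (f j) ≤ max2 f :=
  le_ciSup (f := fun p : {p : ι × ι // p.1 ≠ p.2} => min (f p.val.1) (f p.val.2))
    (Set.Finite.bddAbove (Set.finite_range _)) ⟨(i,j), h⟩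

lemma max2_le (ha : 0 ≤ a) (h : ∀ i j, i ≠ j → min (f i) (f j) ≤ a) : max2 f ≤ a := by
  unfold max2
  rcases isEmpty_or_nonempty {p : ι × ι // p.1 ≠ p.2} with he | hne
  · rw [Real.iSup_of_isEmpty]; exact ha
  · exact ciSup_le fun p => h p.1.1 p.1.2 p.2

lemma max2_nonneg (hf : ∀ i, 0 ≤ f i) : 0 ≤ max2 f := by
  unfold max2
  rcases isEmpty_or_nonempty {p : ι × ι // p.1 ≠ p.2} with he | hne
  · rw [Real.iSup_of_isEmpty]
  · obtain ⟨p⟩ := hne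
    exact le_trans (le_min (hf _) (hf _))
      (le_ciSup (f := fun p : {p : ι × ι // p.1 ≠ p.2} => min (f p.val.1) (f p.val.2))
        (Set.Finite.bddAbove (Set.finite_range _)) p)

lemma max2_mono (hg : ∀ i, 0 ≤ g i) (h : ∀ i, f i ≤ g i) : max2 f ≤ max2 g := by
  refine max2_le (max2_nonneg hg) fun i j hij => le_trans (min_le_min (h i) (h j)) (min_le_max2 hij)

lemma max2_pos_pair (h : 0 < max2 f) : ∃ i j, i ≠ j ∧ 0 < min (f i) (f j) := by
  by_contra hc
  push_neg at hc
  exact absurd (max2_le le_rfl fun i j hij => hc i j hij) (not_le.mpr h)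
end max2lemmas

section helpers
variable {ι X Y : Type*} [Fintype ι] [DecidableEq ι] [Fintype X] [Fintype Y] [Nonempty ι]
  [DecidableEq X] [DecidableEq Y]

lemma sum_split (Φ : (ι → X × Y) → ℝ) :
    ∑ f : ι → X × Y, Φ f = ∑ q : (ι → X) × (ι → Y), Φ (fun i => (q.1 i, q.2 i)) := by
  rw [← Equiv.sum_comp (Equiv.arrowProdEquivProdArrow ι (fun _ => X) (fun _ => Y)).symm Φ]
  exact Finset.sum_congr rfl fun q _ => rfl

lemma prod_all (g : ι → X → ℝ) (hg : ∀ j, ∑ x, g j x = 1) :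
    ∑ ξ : ι → X, ∏ i, g i (ξ i) = 1 := by
  rw [← Fintype.piFinset_univ, ← Finset.prod_univ_sum]
  exact Finset.prod_eq_one fun i _ => hg i

lemma prod_cond (g : ι → X → ℝ) (hg : ∀ j, ∑ x, g j x = 1) (i : ι) (x : X) :
    ∑ ξ : ι → X, (if ξ i = x then ∏ j, g j (ξ j) else 0) = g i x := by
  have hpt : ∀ ξ : ι → X, (if ξ i = x then ∏ j, g j (ξ j) else 0)
      = ∏ j, (if j = i then (if ξ j = x then g j (ξ j) else 0) else g j (ξ j)) := by
    intro ξ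
    by_cases h : ξ i = x
    · rw [if_pos h]
      refine Eq.symm (Finset.prod_congr rfl fun j _ => ?_)
      by_cases hj : j = i
      · rw [if_pos hj, if_pos (by rw [hj]; exact h)]
      · rw [if_neg hj]
    · rw [if_neg h]
      refine Eq.symm (Finset.prod_eq_zero (mem_univ i) ?_)
      rw [if_pos rfl, if_neg h]
  set G : ι → X → ℝ := fun j b => if j = i then (if b = x then g j b else 0) else g j b with hG
  have h2 : ∀ ξ : ι → X, (∏ j, (if j = i then (if ξ j = x then g j (ξ j) else 0) else g j (ξ j)))
      = ∏ j, G j (ξ j) := fun ξ => rfl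
  rw [Finset.sum_congr rfl fun ξ _ => hpt ξ, Finset.sum_congr rfl fun ξ _ => h2 ξ,
    ← Fintype.piFinset_univ, ← Finset.prod_univ_sum]
  have hfac : ∀ j, (∑ x' : X, G j x') = (if j = i then g i x else 1) := by
    intro j
    by_cases hj : j = i
    · subst hj
      simp only [hG, if_pos rfl]
      rw [Finset.sum_ite_eq' univ x (g j), if_pos (mem_univ x)]
      simp
    · simp only [hG, if_neg hj]
      exact hg j
  rw [Finset.prod_congr rfl fun j _ => hfac j, Finset.prod_ite_eq' univ i (fun _ => g i x),
    if_pos (mem_univ i)]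
end helpers

section decomp
open scoped Classical

variable {ι Y : Type*} [Fintype ι] [Fintype Y] [DecidableEq ι] [DecidableEq Y] [Nonempty ι]

noncomputable def meas (c : Y → ι) (n : ι → Y → ℝ) : ℕ :=
  ((univ : Finset (ι × Y)).filter (fun p => n p.1 p.2 ≠ 0)).card +
  ((univ : Finset (ι × Y)).filter (fun p => n p.1 p.2 ≠ 0 ∧ n p.1 p.2 ≠ n (c p.2) p.2)).card

set_option maxHeartbeats 1000000 in
lemma decomp (c : Y → ι) :
    ∀ (N : ℕ) (n : ι → Y → ℝ) (r : ℝ), meas c n ≤ N →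
      (∀ i y, 0 ≤ n i y) → (∀ i, ∑ y, n i y = r) →
      (∀ y i, n i y ≤ n (c y) y) →
      (∑ y, max2 (fun i => n i y) ≤ r) →
      ∃ w : (ι → Y) → ℝ, (∀ t, 0 ≤ w t) ∧
        (∀ t, w t ≠ 0 → ∀ i, t (c (t i)) = t i) ∧
        (∀ i y, ∑ t : ι → Y, (if t i = y then w t else 0) = n i y) := by
  intro N
  induction N with
  | zero =>
    intro n r hm hn hrow hch hs
    have hz : ∀ i y, n i y = 0 := by
      intro i y
      by_contra h0
      have : (i, y) ∈ (univ : Finset (ι × Y)).filter (fun p => n p.1 p.2 ≠ 0) :=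
        mem_filter.mpr ⟨mem_univ _, h0⟩
      have hc1 : 0 < ((univ : Finset (ι × Y)).filter (fun p => n p.1 p.2 ≠ 0)).card :=
        Finset.card_pos.mpr ⟨_, this⟩
      unfold meas at hm
      omega
    exact ⟨0, fun t => le_rfl, fun t h => absurd rfl h, fun i y => by simp [hz]⟩
  | succ N IH =>
    intro n r hm hn hrow hch hs
    by_cases hz : ∀ i y, n i y = 0
    · exact ⟨0, fun t => le_rfl, fun t h => absurd rfl h, fun i y => by simp [hz]⟩
    push_neg at hz
    obtain ⟨i₀, y₀, h₀⟩ := hz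
    have hn₀ : 0 < n i₀ y₀ := (hn i₀ y₀).lt_of_ne (Ne.symm h₀)
    have hrpos : 0 < r := by
      have := Finset.single_le_sum (fun y _ => hn i₀ y) (mem_univ y₀)
      rw [hrow i₀] at this
      linarith
    haveI : Nonempty Y := ⟨y₀⟩
    set s : Y → ℝ := fun y => max2 (fun i => n i y) with hs_def
    have hs0 : ∀ y, 0 ≤ s y := fun y => max2_nonneg (fun i => hn i y)
    obtain ⟨ys, -, hys⟩ := Finset.exists_max_image (univ : Finset Y) s univ_nonempty
    have hys' : ∀ y, s y ≤ s ys := fun y => hys y (mem_univ y)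
    have hnc : ∀ y i, i ≠ c y → n i y ≤ s y := by
      intro y i hi
      have h := min_le_max2 (f := fun i => n i y) hi
      rwa [min_eq_left (hch y i)] at h
    -- the maximal family F of "free" columns with pairwise disjoint max-groups
    set P : Finset Y → Prop := fun F =>
      (∀ y ∈ F, 0 < n (c y) y ∧ ∀ j, n j y = n (c y) y → n j ys = 0) ∧
      (∀ y ∈ F, ∀ y' ∈ F, y ≠ y' → ∀ j, ¬(n j y = n (c y) y ∧ n j y' = n (c y') y')) with hP_def
    have hPempty : P ∅ := ⟨fun y hy => absurd hy (notMem_empty y),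
      fun y hy => absurd hy (notMem_empty y)⟩
    obtain ⟨F, hFS, hFmax⟩ := Finset.exists_max_image ((univ : Finset Y).powerset.filter P)
      card ⟨∅, mem_filter.mpr ⟨mem_powerset.mpr (empty_subset _), hPempty⟩⟩
    have hPF : P F := (Finset.mem_filter.mp hFS).2
    have hFmax' : ∀ y, y ∉ F → ¬ P (insert y F) := by
      intro y hy hPy
      have hmem : insert y F ∈ ((univ : Finset Y).powerset.filter P) :=
        mem_filter.mpr ⟨mem_powerset.mpr (subset_univ _), hPy⟩
      have := hFmax _ hmem
      rw [Finset.card_insert_of_notMem hy] at this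
      omega
    -- covering lemma
    have hcover : ∀ i, ¬(0 < n i ys) → ¬(∃ y ∈ F, n i y = n (c y) y) →
        ∃ y ∈ F, 0 < n i y := by
      intro i h1 h2
      push_neg at h2
      by_contra hcov
      push_neg at hcov
      have hi_ys : n i ys = 0 := le_antisymm (not_lt.mp h1) (hn i ys)
      have hkey : ∀ y, y ≠ ys → n i y ≤ s y := by
        intro y hy
        rcases eq_or_lt_of_le (hn i y) with h0 | hpos
        · rw [← h0]; exact hs0 y
        by_cases hfree : (0 < n (c y) y ∧ ∀ j, n j y = n (c y) y → n j ys = 0)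
        · have hyF : y ∉ F := by
            intro hyF
            exact absurd hpos (not_lt.mpr (hcov y hyF))
          have hj : ∃ y' ∈ F, ∃ j, n j y = n (c y) y ∧ n j y' = n (c y') y' := by
            by_contra hnoj
            push_neg at hnoj
            apply hFmax' y hyF
            constructor
            · intro z hz
              rcases mem_insert.mp hz with h | h
              · rw [h]; exact hfree
              · exact hPF.1 z h
            · intro z hz z' hz' hne j hj2
              rcases mem_insert.mp hz with h | h <;> rcases mem_insert.mp hz' with h' | h'
              · exact hne (h.trans h'.symm)
              · subst h; exact hnoj z' h' j hj2.1 hj2.2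
              · subst h'; exact hnoj z h j hj2.2 hj2.1
              · exact hPF.2 z h z' h' hne j hj2
          obtain ⟨y', hy'F, j, hj1, hj2⟩ := hj
          have hji : j ≠ i := by
            intro hEq
            rw [hEq] at hj2
            have hp := (hPF.1 y' hy'F).1
            rw [← hj2] at hp
            exact absurd hp (not_lt.mpr (hcov y' hy'F))
          have h : min (n i y) (n j y) ≤ max2 (fun k => n k y) :=
            min_le_max2 (f := fun k => n k y) (Ne.symm hji)
          rw [hj1, min_eq_left (hch y i)] at h
          exact h
        · push_neg at hfree
          have hm : 0 < n (c y) y := lt_of_lt_of_le hpos (hch y i)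
          obtain ⟨d, hd1, hd2⟩ := hfree hm
          have hdi : d ≠ i := by
            intro hEq; rw [hEq] at hd2; exact hd2 hi_ys
          have h : min (n i y) (n d y) ≤ max2 (fun j => n j y) :=
            min_le_max2 (f := fun j => n j y) hdi.symm
          rw [hd1, min_eq_left (hch y i)] at h
          exact h
      have hs' : ∑ y, s y ≤ r := hs
      have hsum1 : r ≤ ∑ y ∈ univ.erase ys, s y := by
        have e1 : n i ys + ∑ y ∈ univ.erase ys, n i y = ∑ y, n i y :=
          Finset.add_sum_erase univ (fun y => n i y) (mem_univ ys)
        have e2 : ∑ y ∈ univ.erase ys, n i y ≤ ∑ y ∈ univ.erase ys, s y :=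
          Finset.sum_le_sum (fun y hy => hkey y (Finset.ne_of_mem_erase hy))
        have := hrow i
        rw [← e1, hi_ys] at this
        linarith
      have hsum2 : s ys + ∑ y ∈ univ.erase ys, s y = ∑ y, s y :=
        Finset.add_sum_erase univ s (mem_univ ys)
      have hsys : s ys ≤ 0 := by linarith
      have hzer : ∑ y ∈ univ.erase ys, s y ≤ 0 :=
        Finset.sum_nonpos fun y hy => le_trans (hys' y) hsys
      linarith
    -- definition of the type t
    set t : ι → Y := fun i =>
      if h1 : 0 < n i ys then ys
      else if h2 : ∃ y ∈ F, n i y = n (c y) y then h2.choose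
      else (hcover i h1 h2).choose
      with ht_def
    have hT2 : ∀ i, 0 < n i (t i) ∧ (t i = ys ∨ t i ∈ F) := by
      intro i
      simp only [ht_def]
      by_cases h1 : 0 < n i ys
      · rw [dif_pos h1]; exact ⟨h1, Or.inl rfl⟩
      rw [dif_neg h1]
      by_cases h2 : ∃ y ∈ F, n i y = n (c y) y
      · rw [dif_pos h2]
        obtain ⟨hyF, hEq⟩ := h2.choose_spec
        refine ⟨?_, Or.inr hyF⟩
        rw [hEq]
        exact (hPF.1 _ hyF).1
      · rw [dif_neg h2]
        obtain ⟨hyF, hpos⟩ := (hcover i h1 h2).choose_spec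
        exact ⟨hpos, Or.inr hyF⟩
    have hT3 : ∀ i, 0 < n i ys → t i = ys := by
      intro i h
      simp only [ht_def]
      rw [dif_pos h]
    have hT4 : ∀ i y, y ∈ F → n i y = n (c y) y → t i = y := by
      intro i y hyF hEq
      have h1 : ¬ 0 < n i ys := by
        have h0 := (hPF.1 y hyF).2 i hEq
        rw [h0]
        exact lt_irrefl 0
      have h2 : ∃ y ∈ F, n i y = n (c y) y := ⟨y, hyF, hEq⟩
      simp only [ht_def]
      rw [dif_neg h1, dif_pos h2]
      obtain ⟨hy'F, hEq'⟩ := h2.choose_spec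
      by_contra hne
      exact hPF.2 _ hy'F _ hyF hne i ⟨hEq', hEq⟩
    have hT5 : ∀ i, t (c (t i)) = t i := by
      intro i
      rcases (hT2 i).2 with h | h
      · rw [h]
        apply hT3
        have h' := (hT2 i).1
        rw [h] at h'
        exact lt_of_lt_of_le h' (hch ys i)
      · exact hT4 (c (t i)) (t i) h rfl
    clear ht_def
    clear_value t
    -- epsilon
    have hnlt : ∀ j y, y ∈ F → t j ≠ y → n j y < n (c y) y := by
      intro j y hyF htj
      exact lt_of_le_of_ne (hch y j) (fun hEq => htj (hT4 j y hyF hEq))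
    obtain ⟨ε, hεpos, hεentry, hεgap, hεwit⟩ :
        ∃ ε, 0 < ε ∧ (∀ i, ε ≤ n i (t i)) ∧
          (∀ j y, y ∈ F → t j ≠ y → 0 < n j y → ε ≤ n (c y) y - n j y) ∧
          ((∃ i, n i (t i) = ε) ∨
            (∃ j y, y ∈ F ∧ t j ≠ y ∧ 0 < n j y ∧ n (c y) y - n j y = ε)) := by
      have h1ne : (univ : Finset ι).Nonempty := univ_nonempty
      obtain ⟨iw, -, hiw⟩ := Finset.exists_mem_eq_inf' h1ne (fun i => n i (t i))
      by_cases hS : ((univ : Finset (ι × Y)).filter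
          (fun p : ι × Y => p.2 ∈ F ∧ t p.1 ≠ p.2 ∧ 0 < n p.1 p.2)).Nonempty
      · obtain ⟨pw, hpw, hpweq⟩ := Finset.exists_mem_eq_inf' hS
          (fun p : ι × Y => n (c p.2) p.2 - n p.1 p.2)
        obtain ⟨-, hpw1, hpw2, hpw3⟩ := mem_filter.mp hpw
        refine ⟨min ((univ : Finset ι).inf' h1ne (fun i => n i (t i)))
          (Finset.inf' _ hS (fun p : ι × Y => n (c p.2) p.2 - n p.1 p.2)), ?_, ?_, ?_, ?_⟩
        · apply lt_min
          · rw [hiw]; exact (hT2 iw).1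
          · rw [hpweq]
            have := hnlt pw.1 pw.2 hpw1 hpw2
            linarith
        · intro i
          exact le_trans (min_le_left _ _) (Finset.inf'_le _ (mem_univ i))
        · intro j y h1 h2 h3
          exact le_trans (min_le_right _ _) (Finset.inf'_le
            (f := fun p : ι × Y => n (c p.2) p.2 - n p.1 p.2)
            (mem_filter.mpr ⟨mem_univ ((j, y) : ι × Y), h1, h2, h3⟩))
        · rcases le_total ((univ : Finset ι).inf' h1ne (fun i => n i (t i)))
            (Finset.inf' _ hS (fun p : ι × Y => n (c p.2) p.2 - n p.1 p.2)) with h | h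
          · left
            exact ⟨iw, by rw [min_eq_left h, hiw]⟩
          · right
            exact ⟨pw.1, pw.2, hpw1, hpw2, hpw3, by rw [min_eq_right h, hpweq]⟩
      · refine ⟨(univ : Finset ι).inf' h1ne (fun i => n i (t i)), ?_, ?_, ?_, ?_⟩
        · rw [hiw]; exact (hT2 iw).1
        · intro i
          exact Finset.inf'_le _ (mem_univ i)
        · intro j y h1 h2 h3
          exact absurd ⟨((j, y) : ι × Y),
            mem_filter.mpr ⟨mem_univ ((j, y) : ι × Y), h1, h2, h3⟩⟩ hS
        · left
          exact ⟨iw, hiw.symm⟩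
    have hεr : ε ≤ r := by
      have h := Finset.single_le_sum (fun y _ => hn i₀ y) (mem_univ (t i₀))
      rw [hrow i₀] at h
      exact le_trans (hεentry i₀) h
    -- the new matrix
    set n' : ι → Y → ℝ := fun i y => n i y - if t i = y then ε else 0 with hn'_def
    have hn'le : ∀ i y, n' i y ≤ n i y := by
      intro i y
      simp only [hn'_def]
      by_cases h : t i = y
      · rw [if_pos h]; linarith
      · rw [if_neg h]; linarith
    have hn'0 : ∀ i y, 0 ≤ n' i y := by
      intro i y
      simp only [hn'_def]
      by_cases h : t i = y
      · rw [if_pos h, ← h]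
        have := hεentry i
        linarith
      · rw [if_neg h]
        have := hn i y
        linarith
    have hrow' : ∀ i, ∑ y, n' i y = r - ε := by
      intro i
      simp only [hn'_def]
      rw [Finset.sum_sub_distrib, hrow i, Finset.sum_ite_eq univ (t i) (fun _ => ε),
        if_pos (mem_univ (t i))]
    have hch' : ∀ y i, n' i y ≤ n' (c y) y := by
      intro y i
      by_cases hcy : t (c y) = y
      · by_cases hti : t i = y
        · simp only [hn'_def]
          rw [if_pos hti, if_pos hcy]
          have := hch y i
          linarith
        · simp only [hn'_def]
          rw [if_neg hti, if_pos hcy]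
          by_cases hpos : 0 < n i y
          · have hyr : y = ys ∨ y ∈ F := by
              have h := (hT2 (c y)).2
              rw [hcy] at h
              exact h
            rcases hyr with h | h
            · exfalso
              apply hti
              rw [h] at hpos ⊢
              exact hT3 i hpos
            · have := hεgap i y h hti hpos
              linarith
          · have h0 : n i y = 0 := le_antisymm (not_lt.mp hpos) (hn i y)
            have h1 : ε ≤ n (c y) y := by
              have := hεentry (c y)
              rw [hcy] at this
              exact this
            rw [h0]
            linarith
      · have h1 : n' (c y) y = n (c y) y := by
          simp only [hn'_def]
          rw [if_neg hcy]
          ring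
        rw [h1]
        exact le_trans (hn'le i y) (hch y i)
    -- sum of second maxima decreases by ε
    have hs'le : ∀ y, max2 (fun i => n' i y) ≤ s y := fun y =>
      max2_mono (fun i => hn i y) (fun i => hn'le i y)
    have hsum' : ∑ y, max2 (fun i => n' i y) ≤ r - ε := by
      by_cases hsys : 0 < s ys
      · obtain ⟨a, b, hab, hmin⟩ := max2_pos_pair (f := fun i => n i ys) hsys
        have ha : 0 < n a ys := lt_of_lt_of_le hmin (min_le_left _ _)
        have hb : 0 < n b ys := lt_of_lt_of_le hmin (min_le_right _ _)
        have hta : t a = ys := hT3 a ha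
        have htb : t b = ys := hT3 b hb
        have hεs : ε ≤ s ys := by
          have h1 : ε ≤ n a ys := by have := hεentry a; rwa [hta] at this
          have h2 : ε ≤ n b ys := by have := hεentry b; rwa [htb] at this
          have h3 : min (n a ys) (n b ys) ≤ s ys := min_le_max2 (f := fun i => n i ys) hab
          exact le_trans (le_min h1 h2) h3
        have hkey : max2 (fun i => n' i ys) ≤ s ys - ε := by
          apply max2_le (by linarith)
          intro i j hij
          have hbound : ∀ k, k ≠ c ys → n' k ys ≤ s ys - ε := by
            intro k hk
            by_cases hpos : 0 < n k ys
            · have htk : t k = ys := hT3 k hpos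
              have h1 : n k ys ≤ s ys := hnc ys k hk
              simp only [hn'_def]
              rw [if_pos htk]
              linarith
            · have h0 : n k ys = 0 := le_antisymm (not_lt.mp hpos) (hn k ys)
              have h2 : n' k ys ≤ n k ys := hn'le k ys
              rw [h0] at h2
              linarith
          by_cases hic : i = c ys
          · have hjc : j ≠ c ys := fun h => hij (hic.trans h.symm)
            exact le_trans (min_le_right _ _) (hbound j hjc)
          · exact le_trans (min_le_left _ _) (hbound i hic)
        have hsplit1 : max2 (fun i => n' i ys) + ∑ y ∈ univ.erase ys, max2 (fun i => n' i y)
            = ∑ y, max2 (fun i => n' i y) :=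
          Finset.add_sum_erase univ (fun y => max2 (fun i => n' i y)) (mem_univ ys)
        have hsplit2 : s ys + ∑ y ∈ univ.erase ys, s y = ∑ y, s y :=
          Finset.add_sum_erase univ s (mem_univ ys)
        have herase : ∑ y ∈ univ.erase ys, max2 (fun i => n' i y) ≤ ∑ y ∈ univ.erase ys, s y :=
          Finset.sum_le_sum fun y _ => hs'le y
        have hs' : ∑ y, s y ≤ r := hs
        linarith
      · have hall : ∀ y, s y = 0 := fun y =>
          le_antisymm (le_trans (hys' y) (not_lt.mp hsys)) (hs0 y)
        have h0 : ∑ y, max2 (fun i => n' i y) ≤ 0 :=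
          Finset.sum_nonpos fun y _ => le_trans (hs'le y) (le_of_eq (hall y))
        linarith
    -- measure decreases
    have hnz : ∀ p : ι × Y, n p.1 p.2 = 0 → n' p.1 p.2 = 0 := by
      intro p h0
      simp only [hn'_def]
      by_cases ht : t p.1 = p.2
      · exfalso
        have h' := (hT2 p.1).1
        rw [ht, h0] at h'
        exact lt_irrefl 0 h'
      · rw [if_neg ht, h0]
        ring
    have hmax : ∀ p : ι × Y, n p.1 p.2 ≠ 0 → n p.1 p.2 = n (c p.2) p.2 →
        n' p.1 p.2 = n' (c p.2) p.2 := by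
      intro p hnz0 hEq
      by_cases hcy : t (c p.2) = p.2
      · have hposp : 0 < n p.1 p.2 := (hn _ _).lt_of_ne (Ne.symm hnz0)
        have htp : t p.1 = p.2 := by
          have hyr := (hT2 (c p.2)).2
          rw [hcy] at hyr
          rcases hyr with h | h
          · rw [h] at hposp ⊢
            exact hT3 p.1 hposp
          · exact hT4 p.1 p.2 h hEq
        simp only [hn'_def]
        rw [if_pos htp, if_pos hcy, hEq]
      · have htp : t p.1 ≠ p.2 := by
          intro h
          have h5 := hT5 p.1
          rw [h] at h5
          exact hcy h5
        simp only [hn'_def]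
        rw [if_neg htp, if_neg hcy, hEq]
    have hmeas' : meas c n' ≤ N := by
      have hA : (univ : Finset (ι × Y)).filter (fun p => n' p.1 p.2 ≠ 0) ⊆
          (univ : Finset (ι × Y)).filter (fun p => n p.1 p.2 ≠ 0) := by
        intro p hp
        rw [mem_filter] at hp ⊢
        exact ⟨mem_univ _, fun h0 => hp.2 (hnz p h0)⟩
      have hB : (univ : Finset (ι × Y)).filter
            (fun p => n' p.1 p.2 ≠ 0 ∧ n' p.1 p.2 ≠ n' (c p.2) p.2) ⊆
          (univ : Finset (ι × Y)).filter
            (fun p => n p.1 p.2 ≠ 0 ∧ n p.1 p.2 ≠ n (c p.2) p.2) := by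
        intro p hp
        rw [mem_filter] at hp ⊢
        obtain ⟨-, hp1, hp2⟩ := hp
        have h1 : n p.1 p.2 ≠ 0 := fun h0 => hp1 (hnz p h0)
        exact ⟨mem_univ _, h1, fun hEq => hp2 (hmax p h1 hEq)⟩
      have hlt : meas c n' < meas c n := by
        unfold meas
        rcases hεwit with ⟨i, hi⟩ | ⟨j, y, hyF, htj, hpos, hgap⟩
        · have hp1 : ((i, t i) : ι × Y) ∈ (univ : Finset (ι × Y)).filter
              (fun p => n p.1 p.2 ≠ 0) :=
            mem_filter.mpr ⟨mem_univ _, ne_of_gt (hT2 i).1⟩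
          have hp2 : ((i, t i) : ι × Y) ∉ (univ : Finset (ι × Y)).filter
              (fun p => n' p.1 p.2 ≠ 0) := by
            rw [mem_filter]
            rintro ⟨-, h⟩
            apply h
            show n i (t i) - (if t i = t i then ε else 0) = 0
            rw [if_pos rfl, hi]
            ring
          have hAlt : ((univ : Finset (ι × Y)).filter (fun p => n' p.1 p.2 ≠ 0)).card <
              ((univ : Finset (ι × Y)).filter (fun p => n p.1 p.2 ≠ 0)).card := by
            apply Finset.card_lt_card
            rw [Finset.ssubset_iff_of_subset hA]
            exact ⟨_, hp1, hp2⟩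
          exact Nat.add_lt_add_of_lt_of_le hAlt (Finset.card_le_card hB)
        · have htc : t (c y) = y := hT4 (c y) y hyF rfl
          have hp1 : ((j, y) : ι × Y) ∈ (univ : Finset (ι × Y)).filter
              (fun p => n p.1 p.2 ≠ 0 ∧ n p.1 p.2 ≠ n (c p.2) p.2) :=
            mem_filter.mpr ⟨mem_univ _, ne_of_gt hpos, ne_of_lt (hnlt j y hyF htj)⟩
          have hp2 : ((j, y) : ι × Y) ∉ (univ : Finset (ι × Y)).filter
              (fun p => n' p.1 p.2 ≠ 0 ∧ n' p.1 p.2 ≠ n' (c p.2) p.2) := by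
            rw [mem_filter]
            rintro ⟨-, -, h⟩
            apply h
            show n j y - (if t j = y then ε else 0) = n (c y) y - (if t (c y) = y then ε else 0)
            rw [if_neg htj, if_pos htc]
            linarith
          have hBlt : ((univ : Finset (ι × Y)).filter
                (fun p => n' p.1 p.2 ≠ 0 ∧ n' p.1 p.2 ≠ n' (c p.2) p.2)).card <
              ((univ : Finset (ι × Y)).filter
                (fun p => n p.1 p.2 ≠ 0 ∧ n p.1 p.2 ≠ n (c p.2) p.2)).card := by
            apply Finset.card_lt_card
            rw [Finset.ssubset_iff_of_subset hB]
            exact ⟨_, hp1, hp2⟩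
          exact Nat.add_lt_add_of_le_of_lt (Finset.card_le_card hA) hBlt
      omega
    -- apply the induction hypothesis and assemble
    obtain ⟨w', hw'0, hw'c, hw'm⟩ := IH n' (r - ε) hmeas' hn'0 hrow' hch' hsum'
    refine ⟨fun τ => w' τ + if τ = t then ε else 0, ?_, ?_, ?_⟩
    · intro τ
      show 0 ≤ w' τ + (if τ = t then ε else 0)
      by_cases h : τ = t
      · rw [if_pos h]
        exact add_nonneg (hw'0 τ) hεpos.le
      · rw [if_neg h, add_zero]
        exact hw'0 τ
    · intro τ hτ i
      have hτ' : w' τ + (if τ = t then ε else 0) ≠ 0 := hτ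
      by_cases h : τ = t
      · rw [h]
        exact hT5 i
      · rw [if_neg h, add_zero] at hτ'
        exact hw'c τ hτ' i
    · intro i y
      have hsplit : ∀ τ : ι → Y,
          (if τ i = y then w' τ + (if τ = t then ε else 0) else 0) =
          (if τ i = y then w' τ else 0) + (if τ = t then (if t i = y then ε else 0) else 0) := by
        intro τ
        by_cases h1 : τ = t
        · subst h1
          by_cases h2 : τ i = y <;> simp [h2]
        · by_cases h2 : τ i = y <;> simp [h1, h2]
      rw [Finset.sum_congr rfl (fun τ _ => hsplit τ), Finset.sum_add_distrib, hw'm i y,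
        Finset.sum_ite_eq' univ t (fun τ => if t i = y then ε else 0), if_pos (mem_univ t)]
      simp only [hn'_def]
      by_cases h : t i = y
      · rw [if_pos h]
        ring
      · rw [if_neg h]
        ring

end decomp

theorem stmt8 {ι X Y : Type*} [Fintype ι] [DecidableEq ι] [Fintype X] [Fintype Y] [Nonempty ι]
    [DecidableEq X] [DecidableEq Y]
    (R : ι → X × Y → ℝ) (hR : ∀ i, IsPMF (R i))
    (h2 : ∑ y, max2 (fun i => ∑ x, R i (x, y)) ≤ 1) :
    ∃ Q : (ι → X × Y) → ℝ, IsPMF Q ∧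
      (∀ i p, ∑ f : ι → X × Y, (if f i = p then Q f else 0) = R i p) ∧
      ∑ y, ∑ f : ι → X × Y, (if ∃ i, (f i).2 = y then Q f else 0)
        = ∑ y, ⨆ i, ∑ x, R i (x, y) := by
  classical
  have i₀ : ι := Classical.arbitrary ι
  -- nonemptiness
  have hXYne : (univ : Finset (X × Y)).Nonempty := by
    by_contra h
    rw [not_nonempty_iff_eq_empty] at h
    have h1 := (hR i₀).2
    rw [h, Finset.sum_empty] at h1
    exact one_ne_zero h1.symm
  obtain ⟨⟨x₀, yw⟩, -⟩ := hXYne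
  haveI : Nonempty X := ⟨x₀⟩
  haveI : Nonempty Y := ⟨yw⟩
  -- Y-marginals
  set PY : ι → Y → ℝ := fun i y => ∑ x, R i (x, y) with hPY_def
  have hPY0 : ∀ i y, 0 ≤ PY i y := fun i y => Finset.sum_nonneg fun x _ => (hR i).1 _
  have hPYsum : ∀ i, ∑ y, PY i y = 1 := by
    intro i
    calc ∑ y, ∑ x, R i (x, y) = ∑ x, ∑ y, R i (x, y) := Finset.sum_comm
    _ = ∑ p : X × Y, R i p := (Fintype.sum_prod_type _).symm
    _ = 1 := (hR i).2
  -- champions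
  have hcex : ∀ y, ∃ j, ∀ i, PY i y ≤ PY j y := by
    intro y
    obtain ⟨j, -, hj⟩ := Finset.exists_max_image univ (fun i => PY i y) univ_nonempty
    exact ⟨j, fun i => hj i (mem_univ i)⟩
  choose c hc using hcex
  -- decompose the Y-marginal problem
  obtain ⟨w, hw0, hwc, hwm⟩ := decomp c (meas c PY) PY 1 le_rfl hPY0 hPYsum (fun y i => hc y i) h2
  have hwsum : ∑ τ : ι → Y, w τ = 1 := by
    calc ∑ τ : ι → Y, w τ = ∑ τ : ι → Y, ∑ y, (if τ i₀ = y then w τ else 0) := by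
          refine Finset.sum_congr rfl fun τ _ => ?_
          rw [Finset.sum_ite_eq univ (τ i₀) (fun _ => w τ), if_pos (mem_univ _)]
    _ = ∑ y, ∑ τ : ι → Y, (if τ i₀ = y then w τ else 0) := Finset.sum_comm
    _ = ∑ y, PY i₀ y := Finset.sum_congr rfl fun y _ => hwm i₀ y
    _ = 1 := hPYsum i₀
  -- conditional distributions
  set g : ι → Y → X → ℝ :=
    fun i y x => if 0 < PY i y then R i (x, y) / PY i y else (if x = x₀ then 1 else 0) with hg_def
  have hg0 : ∀ i y x, 0 ≤ g i y x := by
    intro i y x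
    simp only [hg_def]
    by_cases h : 0 < PY i y
    · rw [if_pos h]
      exact div_nonneg ((hR i).1 _) (hPY0 i y)
    · rw [if_neg h]
      by_cases h2 : x = x₀
      · rw [if_pos h2]; norm_num
      · rw [if_neg h2]
  have hgsum : ∀ i y, ∑ x, g i y x = 1 := by
    intro i y
    by_cases h : 0 < PY i y
    · simp only [hg_def, if_pos h]
      rw [← Finset.sum_div]
      exact div_self (ne_of_gt h)
    · simp only [hg_def, if_neg h]
      rw [Finset.sum_ite_eq' univ x₀ (fun _ => (1:ℝ)), if_pos (mem_univ x₀)]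
  have hgmul : ∀ i y x, PY i y * g i y x = R i (x, y) := by
    intro i y x
    by_cases h : 0 < PY i y
    · simp only [hg_def, if_pos h]
      rw [mul_comm, div_mul_cancel₀ _ (ne_of_gt h)]
    · have hz : PY i y = 0 := le_antisymm (not_lt.mp h) (hPY0 i y)
      have hRz : R i (x, y) = 0 := by
        have h1 : R i (x, y) ≤ PY i y :=
          Finset.single_le_sum (fun x' _ => (hR i).1 (x', y)) (mem_univ x)
        have h2 := (hR i).1 (x, y)
        linarith
      rw [hz, hRz, zero_mul]
  -- the coupling
  refine ⟨fun f => w (fun i => (f i).2) * ∏ i, g i ((f i).2) ((f i).1), ⟨?_, ?_⟩, ?_, ?_⟩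
  · exact fun f => mul_nonneg (hw0 _) (Finset.prod_nonneg fun i _ => hg0 _ _ _)
  · -- total mass
    calc ∑ f : ι → X × Y, w (fun i => (f i).2) * ∏ i, g i ((f i).2) ((f i).1)
        = ∑ q : (ι → X) × (ι → Y), w q.2 * ∏ i, g i (q.2 i) (q.1 i) := by
          rw [sum_split (fun f => w (fun i => (f i).2) * ∏ i, g i ((f i).2) ((f i).1))]
    _ = ∑ ξ : ι → X, ∑ τ : ι → Y, w τ * ∏ i, g i (τ i) (ξ i) := Fintype.sum_prod_type _
    _ = ∑ τ : ι → Y, ∑ ξ : ι → X, w τ * ∏ i, g i (τ i) (ξ i) := Finset.sum_comm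
    _ = ∑ τ : ι → Y, w τ * ∑ ξ : ι → X, ∏ i, g i (τ i) (ξ i) :=
          Finset.sum_congr rfl fun τ _ => (Finset.mul_sum _ _ _).symm
    _ = ∑ τ : ι → Y, w τ := by
          refine Finset.sum_congr rfl fun τ _ => ?_
          rw [prod_all (fun i => g i (τ i)) (fun i => hgsum i (τ i)), mul_one]
    _ = 1 := hwsum
  · -- marginals
    intro i p
    calc ∑ f : ι → X × Y, (if f i = p then w (fun j => (f j).2) * ∏ j, g j ((f j).2) ((f j).1) else 0)
        = ∑ q : (ι → X) × (ι → Y), (if (q.1 i, q.2 i) = p then w q.2 * ∏ j, g j (q.2 j) (q.1 j) else 0) := by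
          rw [sum_split (fun f => if f i = p then w (fun j => (f j).2) * ∏ j, g j ((f j).2) ((f j).1) else 0)]
    _ = ∑ ξ : ι → X, ∑ τ : ι → Y, (if (ξ i, τ i) = p then w τ * ∏ j, g j (τ j) (ξ j) else 0) :=
          Fintype.sum_prod_type _
    _ = ∑ τ : ι → Y, ∑ ξ : ι → X, (if (ξ i, τ i) = p then w τ * ∏ j, g j (τ j) (ξ j) else 0) :=
          Finset.sum_comm
    _ = ∑ τ : ι → Y, (if τ i = p.2 then w τ * g i (τ i) p.1 else 0) := by
          refine Finset.sum_congr rfl fun τ _ => ?_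
          by_cases hτ : τ i = p.2
          · rw [if_pos hτ]
            have hcond : ∀ ξ : ι → X, ((ξ i, τ i) = p) ↔ (ξ i = p.1) := by
              intro ξ
              constructor
              · intro h
                exact congrArg Prod.fst h
              · intro h
                rw [Prod.ext_iff]
                exact ⟨h, hτ⟩
            calc ∑ ξ : ι → X, (if (ξ i, τ i) = p then w τ * ∏ j, g j (τ j) (ξ j) else 0)
                = ∑ ξ : ι → X, (if ξ i = p.1 then w τ * ∏ j, g j (τ j) (ξ j) else 0) :=
                  Finset.sum_congr rfl fun ξ _ => if_congr (hcond ξ) rfl rfl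
            _ = w τ * ∑ ξ : ι → X, (if ξ i = p.1 then ∏ j, g j (τ j) (ξ j) else 0) := by
                  rw [Finset.mul_sum]
                  refine Finset.sum_congr rfl fun ξ _ => ?_
                  by_cases h : ξ i = p.1 <;> simp [h]
            _ = w τ * g i (τ i) p.1 := by
                  rw [prod_cond (fun j => g j (τ j)) (fun j => hgsum j (τ j)) i p.1]
          · rw [if_neg hτ]
            refine Finset.sum_eq_zero fun ξ _ => ?_
            exact if_neg (fun h => hτ (congrArg Prod.snd h))
    _ = ∑ τ : ι → Y, (if τ i = p.2 then w τ else 0) * g i p.2 p.1 := by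
          refine Finset.sum_congr rfl fun τ _ => ?_
          by_cases h : τ i = p.2
          · rw [if_pos h, if_pos h, h]
          · rw [if_neg h, if_neg h, zero_mul]
    _ = PY i p.2 * g i p.2 p.1 := by rw [← Finset.sum_mul, hwm i p.2]
    _ = R i p := by rw [hgmul i p.2 p.1, Prod.mk.eta]
  · -- union events
    have hunion : ∀ y, ∑ f : ι → X × Y,
        (if ∃ i, (f i).2 = y then w (fun j => (f j).2) * ∏ j, g j ((f j).2) ((f j).1) else 0)
        = PY (c y) y := by
      intro y
      calc ∑ f : ι → X × Y, (if ∃ i, (f i).2 = y then w (fun j => (f j).2) * ∏ j, g j ((f j).2) ((f j).1) else 0)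
          = ∑ q : (ι → X) × (ι → Y), (if ∃ i, q.2 i = y then w q.2 * ∏ j, g j (q.2 j) (q.1 j) else 0) := by
            rw [sum_split (fun f => if ∃ i, (f i).2 = y then w (fun j => (f j).2) * ∏ j, g j ((f j).2) ((f j).1) else 0)]
      _ = ∑ ξ : ι → X, ∑ τ : ι → Y, (if ∃ i, τ i = y then w τ * ∏ j, g j (τ j) (ξ j) else 0) :=
            Fintype.sum_prod_type _
      _ = ∑ τ : ι → Y, ∑ ξ : ι → X, (if ∃ i, τ i = y then w τ * ∏ j, g j (τ j) (ξ j) else 0) :=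
            Finset.sum_comm
      _ = ∑ τ : ι → Y, (if ∃ i, τ i = y then w τ else 0) := by
            refine Finset.sum_congr rfl fun τ _ => ?_
            by_cases h : ∃ i, τ i = y
            · rw [if_pos h]
              calc ∑ ξ : ι → X, (if ∃ i, τ i = y then w τ * ∏ j, g j (τ j) (ξ j) else 0)
                  = ∑ ξ : ι → X, w τ * ∏ j, g j (τ j) (ξ j) :=
                    Finset.sum_congr rfl fun ξ _ => if_pos h
              _ = w τ * ∑ ξ : ι → X, ∏ j, g j (τ j) (ξ j) := (Finset.mul_sum _ _ _).symm
              _ = w τ := by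
                    rw [prod_all (fun j => g j (τ j)) (fun j => hgsum j (τ j)), mul_one]
            · rw [if_neg h]
              exact Finset.sum_eq_zero fun ξ _ => if_neg h
      _ = ∑ τ : ι → Y, (if τ (c y) = y then w τ else 0) := by
            refine Finset.sum_congr rfl fun τ _ => ?_
            by_cases hw : w τ = 0
            · simp [hw]
            · have hiff : (∃ i, τ i = y) ↔ (τ (c y) = y) := by
                constructor
                · rintro ⟨i, hi⟩
                  have := hwc τ hw i
                  rw [hi] at this
                  exact this
                · intro h
                  exact ⟨c y, h⟩
              rw [if_congr hiff rfl rfl]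
      _ = PY (c y) y := hwm (c y) y
    have hciSup : ∀ y, (⨆ i, PY i y) = PY (c y) y := fun y =>
      le_antisymm (ciSup_le fun i => hc y i)
        (le_ciSup (f := fun i => PY i y) (Set.Finite.bddAbove (Set.finite_range _)) (c y))
    exact Finset.sum_congr rfl fun y _ => (hunion y).trans (hciSup y).symm
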